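/- For every trace-free 2×2 complex matrix Φ (i.e. Φ ∈ Matrix (Fin 2) (Fin 2) ℂ with tr Φ = 0), the Frobenius norm of Φ satisfies the inequality ‖Φ‖⁴ ≤ 4·|det Φ|² + ‖[Φ, Φᴴ]‖². -/

import Mathlib

open Matrix

attribute [local instance] Matrix.frobeniusNormedAddCommGroup

lemma frob_sq (M : Matrix (Fin 2) (Fin 2) ℂ) :
    ‖M‖ ^ 2 = ∑ i, ∑ j, ‖M i j‖ ^ 2 := by
  rw [Matrix.frobenius_norm_def]
  rw [← Real.rpow_natCast _ 2, ← Real.rpow_mul (by positivity)]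
  norm_num

set_option maxHeartbeats 1000000 in
/-- For every trace-free `2 × 2` complex matrix `Φ`, the Frobenius norm of `Φ` satisfies
`‖Φ‖⁴ ≤ 4 * |det Φ|² + ‖⁅Φ, Φᴴ⁆‖²`, where `Φᴴ` is the conjugate transpose and
`⁅A, B⁆ = A * B - B * A` is the commutator. -/
theorem stmt0 (Φ : Matrix (Fin 2) (Fin 2) ℂ) (hΦ : Φ.trace = 0) :
    ‖Φ‖ ^ 4 ≤ 4 * ‖Φ.det‖ ^ 2 + ‖⁅Φ, Φᴴ⁆‖ ^ 2 := by
  have hd : Φ 1 1 = -Φ 0 0 := by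
    have h := hΦ
    rw [Matrix.trace_fin_two] at h
    linear_combination h
  have h4 : ‖Φ‖ ^ 4 = (‖Φ‖ ^ 2) ^ 2 := by ring
  rw [h4, frob_sq Φ, frob_sq ⁅Φ, Φᴴ⁆]
  simp only [Fin.sum_univ_two, Ring.lie_def, Matrix.sub_apply, Matrix.mul_apply,
    Matrix.conjTranspose_apply, Matrix.det_fin_two, hd, Complex.sq_norm]
  simp only [Complex.normSq_apply, Complex.sub_re, Complex.sub_im, Complex.add_re,
    Complex.add_im, Complex.mul_re, Complex.mul_im, Complex.neg_re, Complex.neg_im,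
    Complex.conj_re, Complex.conj_im, Complex.star_def, map_neg]
  set x := (Φ 0 0).re; set y := (Φ 0 0).im
  set u := (Φ 0 1).re; set v := (Φ 0 1).im
  set s := (Φ 1 0).re; set t := (Φ 1 0).im
  nlinarith [sq_nonneg (u^2+v^2-s^2-t^2), sq_nonneg (x*u+y*v-x*s-y*t),
    sq_nonneg (x*v-y*u-y*s+x*t)]
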